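/- If a 2×2 unitary matrix T satisfies (T ⊗ T)·XOR = XOR·(T ⊗ T), where XOR is the controlled-not gate on ℂ²⊗ℂ², then T = e^{iθ}·I for some real θ. -/

import Mathlib

open Matrix Kronecker

noncomputable def XOR : Matrix (Fin 2 × Fin 2) (Fin 2 × Fin 2) ℂ :=
  fun p q => if p.1 = q.1 ∧ p.2 = q.1 + q.2 then 1 else 0

theorem xor_commutant (T : Matrix (Fin 2) (Fin 2) ℂ)
    (hT : T ∈ Matrix.unitaryGroup (Fin 2) ℂ)
    (hcomm : (T ⊗ₖ T) * XOR = XOR * (T ⊗ₖ T)) :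
    ∃ θ : ℝ, T = Complex.exp (θ * Complex.I) • 1 := by
  set a := T 0 0 with ha
  set b := T 0 1 with hb
  set c := T 1 0 with hc
  set d := T 1 1 with hd
  have f11 : (1 + 1 : Fin 2) = 0 := rfl
  have f00 : (0 + 0 : Fin 2) = 0 := rfl
  have f10 : (1 + 0 : Fin 2) = 1 := rfl
  have f01 : (0 + 1 : Fin 2) = 1 := rfl
  have key : ∀ x y u v : Fin 2, T x u * T y (u + v) = T x u * T (x + y) v := by
    intro x y u v
    have h := congrFun (congrFun hcomm (x, y)) (u, v)
    fin_cases x <;> fin_cases y <;> fin_cases u <;> fin_cases v <;>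
      simpa [Matrix.mul_apply, XOR, Fintype.sum_prod_type, Fin.sum_univ_two,
        Matrix.kroneckerMap_apply] using h
  -- unitary entry equations
  have hu00 : (starRingEnd ℂ) a * a + (starRingEnd ℂ) c * c = 1 := by
    have := congrFun (congrFun hT.1 0) 0
    simpa [Matrix.mul_apply, Fin.sum_univ_two, Matrix.one_apply, Matrix.conjTranspose_apply]
      using this
  have hu01 : (starRingEnd ℂ) a * b + (starRingEnd ℂ) c * d = 0 := by
    have := congrFun (congrFun hT.1 0) 1
    simpa [Matrix.mul_apply, Fin.sum_univ_two, Matrix.one_apply, Matrix.conjTranspose_apply]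
      using this
  have hu11 : (starRingEnd ℂ) b * b + (starRingEnd ℂ) d * d = 1 := by
    have := congrFun (congrFun hT.1 1) 1
    simpa [Matrix.mul_apply, Fin.sum_univ_two, Matrix.one_apply, Matrix.conjTranspose_apply]
      using this
  have hv01 : a * (starRingEnd ℂ) c + b * (starRingEnd ℂ) d = 0 := by
    have := congrFun (congrFun hT.2 0) 1
    simpa [Matrix.mul_apply, Fin.sum_univ_two, Matrix.one_apply, Matrix.conjTranspose_apply]
      using this
  have hv11 : c * (starRingEnd ℂ) c + d * (starRingEnd ℂ) d = 1 := by
    have := congrFun (congrFun hT.2 1) 1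
    simpa [Matrix.mul_apply, Fin.sum_univ_two, Matrix.one_apply, Matrix.conjTranspose_apply]
      using this
  -- b = 0
  have hb0 : b = 0 := by
    by_contra hb0
    have e1 : b * a = b * b := by
      have := key 0 0 1 1
      rwa [f11, f00] at this
    have e2 : b * c = b * d := by
      have := key 0 1 1 1
      rwa [f11, f01] at this
    have hab : a = b := mul_left_cancel₀ hb0 e1
    have hcd : c = d := mul_left_cancel₀ hb0 e2
    rw [hab, hcd] at hu01
    exact one_ne_zero (hu11.symm.trans hu01)
  -- c = 0
  have hc0 : c = 0 := by
    by_contra hc0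
    have e1 : c * a = c * c := by
      have := key 1 0 0 0
      rwa [f00, f10] at this
    have e2 : c * b = c * d := by
      have := key 1 0 0 1
      rwa [f01, f10] at this
    have hac : a = c := mul_left_cancel₀ hc0 e1
    have hbd : b = d := mul_left_cancel₀ hc0 e2
    rw [hac, hbd] at hv01
    exact one_ne_zero (hv11.symm.trans hv01)
  rw [hc0] at hu00
  rw [hb0] at hu11
  simp only [mul_zero, map_zero, zero_mul, add_zero, zero_add] at hu00 hu11
  have hd0 : d ≠ 0 := by
    intro h; rw [h] at hu11; simp at hu11
  have had : a = d := by
    have e : d * a = d * d := by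
      have := key 1 0 1 1
      rwa [f11, f10] at this
    exact mul_left_cancel₀ hd0 e
  have hnormsq : ‖a‖ ^ 2 = 1 := by
    have := hu00
    rw [Complex.conj_mul'] at this
    exact_mod_cast this
  have hnorm : ‖a‖ = 1 := by
    nlinarith [norm_nonneg a]
  have hae : Complex.exp ((Complex.arg a : ℂ) * Complex.I) = a := by
    have h := Complex.norm_mul_exp_arg_mul_I a
    rw [hnorm] at h
    simpa using h
  refine ⟨Complex.arg a, ?_⟩
  have hTeq : T = a • (1 : Matrix (Fin 2) (Fin 2) ℂ) := by
    ext i j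
    fin_cases i <;> fin_cases j <;>
      simp [Matrix.one_apply, ← ha, ← hb, ← hc, ← hd, hb0, hc0, ← had]
  rw [hTeq, hae]
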